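/- Behavior of Ξ₁ near zero (step in the proof of Lemma 2). Let λ > 0 and c > 0 and define Ξ₁(G) := 2λ · ∫_G^∞ e^{−λg}/ln(1 + c·g) dg − e^{−λG}/ln(1 + c·G) for G > 0. Then Ξ₁(G) → −∞ as G → 0⁺. -/

import Mathlib

open MeasureTheory Set Filter

private lemma exp_neg_mul_integral_Ioi_one (lam : ℝ) (hlam : 0 < lam) :
    (∫ g in Set.Ioi (1:ℝ), Real.exp (-lam * g)) = Real.exp (-lam) / lam := by
  have hderiv : ∀ x ∈ Set.Ici (1:ℝ),
      HasDerivAt (fun x => -(Real.exp (-lam * x) / lam)) (Real.exp (-lam * x)) x := by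
    intro x _
    have h1 : HasDerivAt (fun x : ℝ => -lam * x) (-lam) x := by
      simpa using (hasDerivAt_id x).const_mul (-lam)
    have h2 := (h1.exp.div_const lam).neg
    have h3 : -(Real.exp (-lam * x) * -lam / lam) = Real.exp (-lam * x) := by
      rw [mul_neg, neg_div, neg_neg, mul_div_assoc, div_self hlam.ne', mul_one]
    rw [h3] at h2
    exact h2
  have htend : Filter.Tendsto (fun x => -(Real.exp (-lam * x) / lam)) atTop (nhds 0) := by
    have : Filter.Tendsto (fun x : ℝ => -lam * x) atTop atBot := by
      exact Filter.Tendsto.const_mul_atTop_of_neg (neg_lt_zero.2 hlam) tendsto_id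
    have h4 := (Real.tendsto_exp_atBot.comp this).neg.div_const lam
    have h5 : ((0:ℝ)) = -0 / lam := by simp
    rw [h5]
    exact h4.congr (fun x => by simp [Function.comp, neg_div])
  have := integral_Ioi_of_hasDerivAt_of_tendsto' hderiv
    (exp_neg_integrableOn_Ioi 1 hlam) htend
  rw [this, mul_one]; ring

theorem Xi1_tendsto_atBot_near_zero (lam c : ℝ) (hlam : 0 < lam) (hc : 0 < c) :
    Filter.Tendsto
      (fun G : ℝ => 2 * lam * (∫ g in Set.Ioi G, Real.exp (-lam * g) / Real.log (1 + c * g)) -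
        Real.exp (-lam * G) / Real.log (1 + c * G))
      (nhdsWithin 0 (Set.Ioi 0)) Filter.atBot := by
  -- auxiliary positivity facts
  have hlog2 : 0 < Real.log 2 := Real.log_pos one_lt_two
  -- integrability of the main integrand
  have hlogpos : ∀ {x : ℝ}, 0 < x → 0 < Real.log (1 + c * x) := by
    intro x hx
    apply Real.log_pos; nlinarith
  have hloglecx : ∀ {x : ℝ}, 0 < x → Real.log (1 + c * x) ≤ c * x := by
    intro x hx
    have := Real.log_le_sub_one_of_pos (x := 1 + c * x) (by nlinarith)
    linarith
  have hI_int : ∀ G : ℝ, 0 < G →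
      IntegrableOn (fun g => Real.exp (-lam * g) / Real.log (1 + c * g)) (Set.Ioi G) := by
    intro G hG
    apply Integrable.mono' ((exp_neg_integrableOn_Ioi G hlam).const_mul (Real.log (1 + c * G))⁻¹)
    · apply ContinuousOn.aestronglyMeasurable _ measurableSet_Ioi
      apply ContinuousOn.div (by fun_prop)
      · apply ContinuousOn.log (by fun_prop)
        intro x hx
        have hx' : G < x := hx
        nlinarith
      · intro x hx
        exact ne_of_gt (hlogpos (hG.trans hx))
    · filter_upwards [ae_restrict_mem measurableSet_Ioi] with x hx
      have hx0 : G < x := hx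
      have h1 : 0 < Real.log (1 + c * x) := hlogpos (hG.trans hx0)
      have h2 : Real.log (1 + c * G) ≤ Real.log (1 + c * x) := by
        apply Real.log_le_log (by nlinarith); nlinarith
      rw [Real.norm_eq_abs, abs_of_nonneg (by positivity)]
      rw [div_eq_inv_mul]
      gcongr
      exact hlogpos hG
  -- integrability of the comparison function
  have hφ_int : ∀ G : ℝ, 0 < G →
      IntegrableOn (fun g => Real.exp (-lam * g) * ((c * g)⁻¹ + 1)) (Set.Ioi G) := by
    intro G hG
    apply Integrable.mono' ((exp_neg_integrableOn_Ioi G hlam).const_mul ((c * G)⁻¹ + 1))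
    · apply ContinuousOn.aestronglyMeasurable _ measurableSet_Ioi
      apply ContinuousOn.mul (by fun_prop)
      apply ContinuousOn.add _ continuousOn_const
      apply ContinuousOn.inv₀ (by fun_prop)
      intro x hx
      have hx' : G < x := hx
      nlinarith
    · filter_upwards [ae_restrict_mem measurableSet_Ioi] with x hx
      have hx0 : G < x := hx
      have hx0' : 0 < x := hG.trans hx0
      have h1 : (c * x)⁻¹ ≤ (c * G)⁻¹ := by
        apply inv_anti₀ (by positivity); nlinarith
      have hxnn : 0 ≤ (c * x)⁻¹ + 1 := by positivity
      rw [Real.norm_eq_abs, abs_of_nonneg (by positivity), mul_comm]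
      exact mul_le_mul_of_nonneg_right (by linarith) (Real.exp_pos _).le
  -- the key integral upper bound
  have key : ∀ G : ℝ, 0 < G → G ≤ 1 →
      (∫ g in Set.Ioi G, Real.exp (-lam * g) / Real.log (1 + c * g)) ≤
        c⁻¹ * (-Real.log G) + (1 + (c⁻¹ + 1) * Real.exp (-lam) / lam) := by
    intro G hG hG1
    have step1 : (∫ g in Set.Ioi G, Real.exp (-lam * g) / Real.log (1 + c * g)) ≤
        ∫ g in Set.Ioi G, Real.exp (-lam * g) * ((c * g)⁻¹ + 1) := by
      apply setIntegral_mono_on (hI_int G hG) (hφ_int G hG) measurableSet_Ioi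
      intro x hx
      have hx0 : 0 < x := hG.trans hx
      have hcx : 0 < c * x := by positivity
      have hlb : c * x / (1 + c * x) ≤ Real.log (1 + c * x) := by
        have := Real.log_le_sub_one_of_pos (x := (1 + c * x)⁻¹) (by positivity)
        rw [Real.log_inv] at this
        have h' : (1 + c * x)⁻¹ - 1 = -(c * x / (1 + c * x)) := by
          field_simp
          ring
        linarith [this, h'.le]
      have hlogx : 0 < Real.log (1 + c * x) := hlogpos hx0
      rw [div_eq_mul_inv]
      apply mul_le_mul_of_nonneg_left _ (Real.exp_pos _).le
      have h5 : (Real.log (1 + c * x))⁻¹ ≤ (c * x / (1 + c * x))⁻¹ := by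
        apply inv_anti₀ (by positivity) hlb
      calc (Real.log (1 + c * x))⁻¹ ≤ (c * x / (1 + c * x))⁻¹ := h5
        _ = (c * x)⁻¹ + 1 := by field_simp
    have hsplit : (∫ g in Set.Ioi G, Real.exp (-lam * g) * ((c * g)⁻¹ + 1)) =
        (∫ g in Set.Ioc G 1, Real.exp (-lam * g) * ((c * g)⁻¹ + 1)) +
        ∫ g in Set.Ioi (1:ℝ), Real.exp (-lam * g) * ((c * g)⁻¹ + 1) := by
      rw [← Set.Ioc_union_Ioi_eq_Ioi hG1]
      exact setIntegral_union (Set.Ioc_disjoint_Ioi le_rfl) measurableSet_Ioi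
        ((hφ_int G hG).mono_set Set.Ioc_subset_Ioi_self)
        ((hφ_int G hG).mono_set (Set.Ioi_subset_Ioi hG1))
    -- bound on (G, 1]
    have hψii : IntervalIntegrable (fun x : ℝ => (c * x)⁻¹ + 1) volume G 1 := by
      apply ContinuousOn.intervalIntegrable
      apply ContinuousOn.add _ continuousOn_const
      apply ContinuousOn.inv₀ (by fun_prop)
      intro x hx
      rw [Set.uIcc_of_le hG1] at hx
      have : 0 < x := lt_of_lt_of_le hG hx.1
      positivity
    have hpiece1 : (∫ g in Set.Ioc G 1, Real.exp (-lam * g) * ((c * g)⁻¹ + 1)) ≤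
        c⁻¹ * (-Real.log G) + 1 := by
      have hmono : (∫ g in Set.Ioc G 1, Real.exp (-lam * g) * ((c * g)⁻¹ + 1)) ≤
          ∫ g in Set.Ioc G 1, ((c * g)⁻¹ + 1) := by
        apply setIntegral_mono_on ((hφ_int G hG).mono_set Set.Ioc_subset_Ioi_self)
          hψii.1 measurableSet_Ioc
        intro x hx
        have hx0 : 0 < x := hG.trans hx.1
        have : Real.exp (-lam * x) ≤ 1 := by
          apply Real.exp_le_one_iff.2; nlinarith
        nlinarith [inv_pos.2 (show (0:ℝ) < c * x by positivity), this]
      have hval : (∫ g in Set.Ioc G 1, ((c * g)⁻¹ + 1)) = c⁻¹ * (-Real.log G) + (1 - G) := by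
        rw [← intervalIntegral.integral_of_le hG1]
        have h1 : IntervalIntegrable (fun x : ℝ => (c * x)⁻¹) volume G 1 := by
          simpa using hψii.sub (intervalIntegrable_const (c := (1:ℝ)))
        rw [intervalIntegral.integral_add h1 (intervalIntegrable_const (c := (1:ℝ)))]
        have h2 : ∫ x in G..1, (c * x)⁻¹ = c⁻¹ * (-Real.log G) := by
          have : (fun x : ℝ => (c * x)⁻¹) = fun x : ℝ => c⁻¹ * x⁻¹ := by
            funext x; rw [mul_inv]
          rw [this, intervalIntegral.integral_const_mul,
            integral_inv_of_pos hG one_pos]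
          rw [Real.log_div one_ne_zero (ne_of_gt hG), Real.log_one]
          ring
        rw [h2]
        simp
      rw [hval] at hmono
      linarith
    -- bound on (1, ∞)
    have hpiece2 : (∫ g in Set.Ioi (1:ℝ), Real.exp (-lam * g) * ((c * g)⁻¹ + 1)) ≤
        (c⁻¹ + 1) * Real.exp (-lam) / lam := by
      have hmono : (∫ g in Set.Ioi (1:ℝ), Real.exp (-lam * g) * ((c * g)⁻¹ + 1)) ≤
          ∫ g in Set.Ioi (1:ℝ), (c⁻¹ + 1) * Real.exp (-lam * g) := by
        apply setIntegral_mono_on ((hφ_int G hG).mono_set (Set.Ioi_subset_Ioi hG1))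
          ((exp_neg_integrableOn_Ioi 1 hlam).const_mul _) measurableSet_Ioi
        intro x hx
        have hx1 : 1 < x := hx
        have h1 : (c * x)⁻¹ ≤ c⁻¹ := by
          apply inv_anti₀ hc; nlinarith
        rw [mul_comm]
        exact mul_le_mul_of_nonneg_right (by linarith) (Real.exp_pos _).le
      rw [integral_const_mul, exp_neg_mul_integral_Ioi_one lam hlam] at hmono
      calc (∫ g in Set.Ioi (1:ℝ), Real.exp (-lam * g) * ((c * g)⁻¹ + 1)) ≤
          (c⁻¹ + 1) * (Real.exp (-lam) / lam) := hmono
        _ = (c⁻¹ + 1) * Real.exp (-lam) / lam := by ring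
    have hexple : (c⁻¹ + 1) * Real.exp (-lam) / lam ≤ (c⁻¹ + 1) * Real.exp (-lam) / lam := le_rfl
    calc (∫ g in Set.Ioi G, Real.exp (-lam * g) / Real.log (1 + c * g)) ≤
        (∫ g in Set.Ioc G 1, Real.exp (-lam * g) * ((c * g)⁻¹ + 1)) +
        ∫ g in Set.Ioi (1:ℝ), Real.exp (-lam * g) * ((c * g)⁻¹ + 1) := by
          rw [← hsplit]; exact step1
      _ ≤ (c⁻¹ * (-Real.log G) + 1) + (c⁻¹ + 1) * Real.exp (-lam) / lam := by
          exact add_le_add hpiece1 hpiece2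
      _ = c⁻¹ * (-Real.log G) + (1 + (c⁻¹ + 1) * Real.exp (-lam) / lam) := by ring
  -- constants for the final bound
  set K : ℝ := 2 * lam * (1 + (c⁻¹ + 1) * Real.exp (-lam) / lam) with hK
  set a : ℝ := 2 * lam / c with ha
  set b : ℝ := (2 * c)⁻¹ with hb
  have hb0 : 0 < b := by rw [hb]; positivity
  -- the bounding function tends to -∞
  have hbound : Filter.Tendsto (fun G : ℝ => a * Real.log G⁻¹ + K - b * G⁻¹)
      (nhdsWithin 0 (Set.Ioi 0)) Filter.atBot := by
    have hh : Filter.Tendsto (fun t : ℝ => a * Real.log t + K - b * t) Filter.atTop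
        Filter.atBot := by
      apply Filter.tendsto_atBot_mono' Filter.atTop
        (f₁ := fun t : ℝ => K - (b / 2) * t)
      · have := (Real.isLittleO_log_id_atTop.const_mul_left a).bound (half_pos hb0)
        filter_upwards [this, Filter.eventually_ge_atTop (0:ℝ)] with t ht ht0
        simp only [Real.norm_eq_abs, id_eq] at ht
        rw [abs_of_nonneg ht0] at ht
        have : a * Real.log t ≤ b / 2 * t := (le_abs_self _).trans ht
        linarith
      · have h1 : Filter.Tendsto (fun t : ℝ => (b / 2) * t) Filter.atTop Filter.atTop :=
          Filter.Tendsto.const_mul_atTop (half_pos hb0) tendsto_id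
        have h2 := tendsto_neg_atTop_atBot.comp h1
        have h3 := tendsto_atBot_add_const_left Filter.atTop K h2
        exact h3.congr (fun t => by simp [sub_eq_add_neg, Function.comp])
    have := hh.comp tendsto_inv_nhdsGT_zero
    exact this
  -- conclude by comparison
  apply Filter.tendsto_atBot_mono' (nhdsWithin 0 (Set.Ioi 0)) _ hbound
  have hmem : Set.Ioo (0:ℝ) (min 1 (Real.log 2 / lam)) ∈ nhdsWithin 0 (Set.Ioi 0) := by
    apply Ioo_mem_nhdsGT_of_mem
    constructor
    · exact le_rfl
    · positivity
  filter_upwards [hmem] with G hG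
  obtain ⟨hG0, hGlt⟩ := hG
  have hG1 : G ≤ 1 := le_of_lt (lt_of_lt_of_le hGlt (min_le_left _ _))
  have hGl2 : lam * G ≤ Real.log 2 := by
    have := lt_of_lt_of_le hGlt (min_le_right _ _)
    rw [lt_div_iff₀ hlam] at this
    linarith [this.le]
  -- lower bound on the subtracted term
  have hT : (2:ℝ)⁻¹ * (c * G)⁻¹ ≤ Real.exp (-lam * G) / Real.log (1 + c * G) := by
    have h1 : (2:ℝ)⁻¹ ≤ Real.exp (-lam * G) := by
      rw [show ((2:ℝ)⁻¹) = Real.exp (-Real.log 2) by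
        rw [Real.exp_neg, Real.exp_log two_pos]]
      apply Real.exp_le_exp.2
      linarith
    have h2 : Real.log (1 + c * G) ≤ c * G := hloglecx hG0
    have h3 : 0 < Real.log (1 + c * G) := hlogpos hG0
    rw [← div_eq_mul_inv]
    exact div_le_div₀ (Real.exp_pos _).le h1 h3 h2
  have hI := key G hG0 hG1
  have hGinv : -Real.log G = Real.log G⁻¹ := (Real.log_inv G).symm
  have hbG : b * G⁻¹ = 2⁻¹ * (c * G)⁻¹ := by
    rw [hb]; field_simp
  calc 2 * lam * (∫ g in Set.Ioi G, Real.exp (-lam * g) / Real.log (1 + c * g)) -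
        Real.exp (-lam * G) / Real.log (1 + c * G)
      ≤ 2 * lam * (c⁻¹ * (-Real.log G) + (1 + (c⁻¹ + 1) * Real.exp (-lam) / lam)) -
        2⁻¹ * (c * G)⁻¹ := by
        have := mul_le_mul_of_nonneg_left hI (by positivity : (0:ℝ) ≤ 2 * lam)
        linarith
    _ = a * Real.log G⁻¹ + K - b * G⁻¹ := by
        rw [← hGinv, hbG, ha, hK]; ring
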